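/- arXiv:2404.18724 — 3 statements merged into one kernel-verified Lean document; each statement's English description precedes it below -/
import Mathlib

section
/- Let v minimize Q(v) = ⟨g, v⟩ + (1/2)⟨J v, v⟩ + (L/6)‖v‖³_H over ℝᵖ, where H is symmetric positive definite, J symmetric, L > 0, and ‖v‖_H = ⟨Hv,v⟩^{1/2}. Then J + (L/2)‖v‖_H · H is positive semidefinite. -/
set_option maxHeartbeats 1000000

open Matrix

private lemma aux_cube (r s : ℝ) (hr : 0 < r) (hs : 0 ≤ s) :
    s^3 ≤ r^3 + 3/2*r*(s^2 - r^2) + 3/(4*r)*(s^2 - r^2)^2 := by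
  have h1 : 0 ≤ (s - r)^2 * (3*s^2 + 2*r*s + r^2) :=
    mul_nonneg (sq_nonneg _) (by positivity)
  rw [← sub_nonneg]
  have h2 : r^3 + 3/2*r*(s^2 - r^2) + 3/(4*r)*(s^2 - r^2)^2 - s^3
      = ((s - r)^2 * (3*s^2 + 2*r*s + r^2)) / (4*r) := by
    field_simp
    ring
  rw [h2]
  exact div_nonneg h1 (by linarith)

private lemma aux_le (c C : ℝ) (h : ∀ t : ℝ, 0 < t → t ≤ 1 → c ≤ t * C) : c ≤ 0 := by
  have key : ∀ ε : ℝ, 0 < ε → c ≤ 0 + ε := by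
    intro ε hε
    have hden : (0:ℝ) < |C| + 1 := by positivity
    set t := min 1 (ε / (|C| + 1)) with htdef
    have ht0 : 0 < t := lt_min one_pos (by positivity)
    have ht1 : t ≤ 1 := min_le_left _ _
    have h1 : c ≤ t * C := h t ht0 ht1
    have h2 : t * C ≤ t * |C| := mul_le_mul_of_nonneg_left (le_abs_self C) ht0.le
    have h3 : t ≤ ε / (|C| + 1) := min_le_right _ _
    have h4 : t * |C| ≤ (ε / (|C| + 1)) * |C| :=
      mul_le_mul_of_nonneg_right h3 (abs_nonneg C)
    have h5 : (ε / (|C| + 1)) * |C| ≤ ε := by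
      rw [div_mul_eq_mul_div, div_le_iff₀ hden]
      nlinarith [abs_nonneg C]
    linarith
  exact le_of_forall_pos_le_add key

private lemma aux_nonneg (c C : ℝ) (h : ∀ t : ℝ, 0 < t → t ≤ 1 → 0 ≤ c + t * C) : 0 ≤ c := by
  have := aux_le (-c) C (fun t ht0 ht1 => by linarith [h t ht0 ht1])
  linarith

private lemma aux_fo_scalar (L r gh bJ aJ b a : ℝ) (hL : 0 < L) (hr : 0 < r) (ha : 0 ≤ a)
    (hx : ∀ t : ℝ, 0 ≤ r^2 + 2*t*b + t^2*a)
    (hkey : ∀ t : ℝ, 0 ≤ t*gh + t*bJ + t^2/2*aJ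
      + L/6*((Real.sqrt (r^2 + 2*t*b + t^2*a))^3 - r^3)) :
    gh + bJ + L/2*r*b = 0 := by
  have keyt : ∀ t : ℝ, 0 ≤ t * (gh + bJ + L/2*r*b)
      + t^2 * (aJ/2 + L/4*r*a + L/(8*r)*(2*b + t*a)^2) := by
    intro t
    have hs : (0:ℝ) ≤ Real.sqrt (r^2 + 2*t*b + t^2*a) := Real.sqrt_nonneg _
    have hs2 : (Real.sqrt (r^2 + 2*t*b + t^2*a))^2 = r^2 + 2*t*b + t^2*a :=
      Real.sq_sqrt (hx t)
    have hcube := aux_cube r (Real.sqrt (r^2 + 2*t*b + t^2*a)) hr hs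
    rw [hs2] at hcube
    have hcube' := mul_le_mul_of_nonneg_left hcube (by positivity : (0:ℝ) ≤ L/6)
    have hexp : L/6 * (r^3 + 3/2*r*(r^2 + 2*t*b + t^2*a - r^2)
        + 3/(4*r)*(r^2 + 2*t*b + t^2*a - r^2)^2)
        = L/6*r^3 + L/2*r*t*b + L/4*r*t^2*a + L/(8*r)*t^2*(2*b+t*a)^2 := by
      field_simp
      ring
    rw [hexp] at hcube'
    nlinarith [hkey t, hcube']
  have habs : ∀ t : ℝ, 0 < t → t ≤ 1 →
      (2*b + t*a)^2 ≤ (2*|b| + a)^2 ∧ (2*b + (-t)*a)^2 ≤ (2*|b| + a)^2 := by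
    intro t ht0 ht1
    constructor
    · apply sq_le_sq'
      · nlinarith [le_abs_self b, neg_abs_le b, mul_nonneg ht0.le ha]
      · nlinarith [le_abs_self b, mul_nonneg (sub_nonneg.mpr ht1) ha,
          mul_nonneg ht0.le ha]
    · apply sq_le_sq'
      · nlinarith [neg_abs_le b, mul_nonneg (sub_nonneg.mpr ht1) ha,
          mul_nonneg ht0.le ha]
      · nlinarith [le_abs_self b, mul_nonneg ht0.le ha]
  have h1 : gh + bJ + L/2*r*b ≤ 0 := by
    apply aux_le _ (|aJ|/2 + L/4*r*a + L/(8*r)*(2*|b|+a)^2)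
    intro t ht0 ht1
    have hk := keyt (-t)
    have hb2 := (habs t ht0 ht1).2
    have hK : aJ/2 + L/4*r*a + L/(8*r)*(2*b + (-t)*a)^2
        ≤ |aJ|/2 + L/4*r*a + L/(8*r)*(2*|b|+a)^2 := by
      have e2 := mul_le_mul_of_nonneg_left hb2 (by positivity : (0:ℝ) ≤ L/(8*r))
      have e1 := le_abs_self aJ
      linarith
    have hK2 := mul_le_mul_of_nonneg_left hK (sq_nonneg t)
    nlinarith [hk, hK2, ht0, mul_pos ht0 ht0]
  have h2 : -(gh + bJ + L/2*r*b) ≤ 0 := by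
    apply aux_le _ (|aJ|/2 + L/4*r*a + L/(8*r)*(2*|b|+a)^2)
    intro t ht0 ht1
    have hk := keyt t
    have hb2 := (habs t ht0 ht1).1
    have hK : aJ/2 + L/4*r*a + L/(8*r)*(2*b + t*a)^2
        ≤ |aJ|/2 + L/4*r*a + L/(8*r)*(2*|b|+a)^2 := by
      have e2 := mul_le_mul_of_nonneg_left hb2 (by positivity : (0:ℝ) ≤ L/(8*r))
      have e1 := le_abs_self aJ
      linarith
    have hK2 := mul_le_mul_of_nonneg_left hK (sq_nonneg t)
    nlinarith [hk, hK2, ht0, mul_pos ht0 ht0]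
  linarith

/-- If v globally minimizes Q(u) = ⟨g,u⟩ + (1/2)⟨Ju,u⟩ + (L/6)‖u‖³_H over ℝᵖ, with
H symmetric positive definite and J symmetric, then J + (L/2)‖v‖_H·H ⪰ 0. -/
theorem cubic_subproblem_psd {p : ℕ}
    (H : Matrix (Fin p) (Fin p) ℝ) (hHsymm : H.IsSymm) (hHpd : H.PosDef)
    (J : Matrix (Fin p) (Fin p) ℝ) (hJsymm : J.IsSymm)
    (g v : Fin p → ℝ) (L : ℝ) (hL : 0 < L)
    (hmin : ∀ u : Fin p → ℝ,
      g ⬝ᵥ v + (1 / 2) * ((J.mulVec v) ⬝ᵥ v) + (L / 6) * (Real.sqrt ((H.mulVec v) ⬝ᵥ v)) ^ 3 ≤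
      g ⬝ᵥ u + (1 / 2) * ((J.mulVec u) ⬝ᵥ u) + (L / 6) * (Real.sqrt ((H.mulVec u) ⬝ᵥ u)) ^ 3) :
    (J + (L / 2 * Real.sqrt ((H.mulVec v) ⬝ᵥ v)) • H).PosSemidef := by
  -- symmetry of the bilinear forms
  have hsH : ∀ x y : Fin p → ℝ, (H.mulVec x) ⬝ᵥ y = (H.mulVec y) ⬝ᵥ x := by
    intro x y
    rw [dotProduct_comm, dotProduct_mulVec, ← mulVec_transpose, hHsymm.eq, dotProduct_comm]
  have hsJ : ∀ x y : Fin p → ℝ, (J.mulVec x) ⬝ᵥ y = (J.mulVec y) ⬝ᵥ x := by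
    intro x y
    rw [dotProduct_comm, dotProduct_mulVec, ← mulVec_transpose, hJsymm.eq, dotProduct_comm]
  have hHnn : ∀ x : Fin p → ℝ, 0 ≤ (H.mulVec x) ⬝ᵥ x := by
    intro x
    simpa [dotProduct_comm] using hHpd.posSemidef.dotProduct_mulVec_nonneg x
  have hHpos : ∀ x : Fin p → ℝ, x ≠ 0 → 0 < (H.mulVec x) ⬝ᵥ x := by
    intro x hx
    simpa [dotProduct_comm] using hHpd.dotProduct_mulVec_pos hx
  -- expansion of quadratic forms
  have expH : ∀ (t : ℝ) (x y : Fin p → ℝ),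
      (H.mulVec (x + t • y)) ⬝ᵥ (x + t • y)
        = (H.mulVec x) ⬝ᵥ x + 2*t*((H.mulVec x) ⬝ᵥ y) + t^2*((H.mulVec y) ⬝ᵥ y) := by
    intro t x y
    simp only [Matrix.mulVec_add, Matrix.mulVec_smul, dotProduct_add, add_dotProduct,
      dotProduct_smul, smul_dotProduct, smul_eq_mul]
    rw [hsH y x]
    ring
  have expJ : ∀ (t : ℝ) (x y : Fin p → ℝ),
      (J.mulVec (x + t • y)) ⬝ᵥ (x + t • y)
        = (J.mulVec x) ⬝ᵥ x + 2*t*((J.mulVec x) ⬝ᵥ y) + t^2*((J.mulVec y) ⬝ᵥ y) := by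
    intro t x y
    simp only [Matrix.mulVec_add, Matrix.mulVec_smul, dotProduct_add, add_dotProduct,
      dotProduct_smul, smul_dotProduct, smul_eq_mul]
    rw [hsJ y x]
    ring
  set r := Real.sqrt ((H.mulVec v) ⬝ᵥ v) with hrdef
  have hrnn : 0 ≤ r := Real.sqrt_nonneg _
  have hr2 : r^2 = (H.mulVec v) ⬝ᵥ v := Real.sq_sqrt (hHnn v)
  -- the key quadratic-form nonnegativity
  have key : ∀ w : Fin p → ℝ,
      0 ≤ (J.mulVec w) ⬝ᵥ w + (L/2*r) * ((H.mulVec w) ⬝ᵥ w) := by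
    by_cases hv : v = 0
    · -- case v = 0
      have hr0 : r = 0 := by rw [hrdef, hv]; simp
      intro w
      rw [hr0]
      simp only [mul_zero, zero_mul, add_zero]
      rw [hv] at hmin
      simp only [dotProduct_zero, Matrix.mulVec_zero, zero_dotProduct, mul_zero,
        zero_add, add_zero] at hmin
      set s := Real.sqrt ((H.mulVec w) ⬝ᵥ w) with hsdef
      have hs3 : 0 ≤ s := Real.sqrt_nonneg _
      apply aux_nonneg _ ((L/3) * s^3)
      intro t ht0 ht1
      have h1 := hmin (t • w)
      have h2 := hmin ((-t) • w)
      have eJ : ∀ c : ℝ, (J.mulVec (c • w)) ⬝ᵥ (c • w) = c^2 * ((J.mulVec w) ⬝ᵥ w) := by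
        intro c
        simp only [Matrix.mulVec_smul, dotProduct_smul, smul_dotProduct, smul_eq_mul]
        ring
      have eH : ∀ c : ℝ, (H.mulVec (c • w)) ⬝ᵥ (c • w) = c^2 * ((H.mulVec w) ⬝ᵥ w) := by
        intro c
        simp only [Matrix.mulVec_smul, dotProduct_smul, smul_dotProduct, smul_eq_mul]
        ring
      have eg : ∀ c : ℝ, g ⬝ᵥ (c • w) = c * (g ⬝ᵥ w) := by
        intro c
        simp [dotProduct_smul]
      have esq : Real.sqrt (t^2 * ((H.mulVec w) ⬝ᵥ w)) = t * s := by
        rw [Real.sqrt_mul (sq_nonneg t), Real.sqrt_sq ht0.le, hsdef]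
      rw [eJ t, eH t, eg t, esq] at h1
      rw [eJ (-t), eH (-t), eg (-t), neg_sq t, esq] at h2
      rw [hr0] at h1 h2
      nlinarith [h1, h2, mul_pos ht0 ht0]
    · -- case v ≠ 0
      have hqv : 0 < (H.mulVec v) ⬝ᵥ v := hHpos v hv
      have hrpos : 0 < r := Real.sqrt_pos.mpr hqv
      -- first-order optimality condition
      have fo : ∀ h : Fin p → ℝ,
          g ⬝ᵥ h + (J.mulVec v) ⬝ᵥ h + (L/2*r) * ((H.mulVec v) ⬝ᵥ h) = 0 := by
        intro h
        have hx : ∀ t : ℝ,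
            0 ≤ r^2 + 2*t*((H.mulVec v) ⬝ᵥ h) + t^2*((H.mulVec h) ⬝ᵥ h) := by
          intro t
          rw [hr2, ← expH t v h]
          exact hHnn _
        have hkey : ∀ t : ℝ, 0 ≤ t*(g ⬝ᵥ h) + t*((J.mulVec v) ⬝ᵥ h)
            + t^2/2*((J.mulVec h) ⬝ᵥ h)
            + L/6*((Real.sqrt (r^2 + 2*t*((H.mulVec v) ⬝ᵥ h)
                + t^2*((H.mulVec h) ⬝ᵥ h)))^3 - r^3) := by
          intro t
          have hm := hmin (v + t • h)
          have e1 : g ⬝ᵥ (v + t • h) = g ⬝ᵥ v + t * (g ⬝ᵥ h) := by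
            simp [dotProduct_add, dotProduct_smul]
          rw [e1, expJ t v h, expH t v h, ← hr2] at hm
          linarith [hm]
        have := aux_fo_scalar L r (g ⬝ᵥ h) ((J.mulVec v) ⬝ᵥ h) ((J.mulVec h) ⬝ᵥ h)
          ((H.mulVec v) ⬝ᵥ h) ((H.mulVec h) ⬝ᵥ h) hL hrpos (hHnn h) hx hkey
        linarith [this]
      -- minimality on the sphere ‖u‖ = ‖v‖
      have claim1 : ∀ w : Fin p → ℝ,
          2*((H.mulVec v) ⬝ᵥ w) + (H.mulVec w) ⬝ᵥ w = 0 →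
          0 ≤ (J.mulVec w) ⬝ᵥ w + (L/2*r) * ((H.mulVec w) ⬝ᵥ w) := by
        intro w hw
        have hm := hmin (v + w)
        have hv1 : v + w = v + (1:ℝ) • w := by rw [one_smul]
        rw [hv1, expJ 1 v w, expH 1 v w] at hm
        have e1 : g ⬝ᵥ (v + (1:ℝ) • w) = g ⬝ᵥ v + g ⬝ᵥ w := by
          simp [dotProduct_add]
        rw [e1] at hm
        have esph : (H.mulVec v) ⬝ᵥ v + 2*1*((H.mulVec v) ⬝ᵥ w)
            + 1^2*((H.mulVec w) ⬝ᵥ w) = (H.mulVec v) ⬝ᵥ v := by linarith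
        rw [esph, ← hrdef] at hm
        have hfo := fo w
        have hbw : (H.mulVec v) ⬝ᵥ w = -((H.mulVec w) ⬝ᵥ w)/2 := by linarith
        rw [hbw] at hfo
        linarith [hm, hfo]
      -- nonnegativity when ⟨Hv, h⟩ ≠ 0
      have claim2 : ∀ h : Fin p → ℝ, (H.mulVec v) ⬝ᵥ h ≠ 0 →
          0 ≤ (J.mulVec h) ⬝ᵥ h + (L/2*r) * ((H.mulVec h) ⬝ᵥ h) := by
        intro h hb
        have hh : h ≠ 0 := by
          rintro rfl
          simp at hb
        have ha : 0 < (H.mulVec h) ⬝ᵥ h := hHpos h hh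
        have ha' : (H.mulVec h) ⬝ᵥ h ≠ 0 := ne_of_gt ha
        set t := -2*((H.mulVec v) ⬝ᵥ h)/((H.mulVec h) ⬝ᵥ h) with htdef
        have ht : t ≠ 0 := by
          rw [htdef]
          exact div_ne_zero (mul_ne_zero (by norm_num) hb) ha'
        have eJ : (J.mulVec (t • h)) ⬝ᵥ (t • h) = t^2 * ((J.mulVec h) ⬝ᵥ h) := by
          simp only [Matrix.mulVec_smul, dotProduct_smul, smul_dotProduct, smul_eq_mul]
          ring
        have eH : (H.mulVec (t • h)) ⬝ᵥ (t • h) = t^2 * ((H.mulVec h) ⬝ᵥ h) := by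
          simp only [Matrix.mulVec_smul, dotProduct_smul, smul_dotProduct, smul_eq_mul]
          ring
        have ebH : (H.mulVec v) ⬝ᵥ (t • h) = t * ((H.mulVec v) ⬝ᵥ h) := by
          simp only [dotProduct_smul, smul_eq_mul]
        have hc := claim1 (t • h) ?_
        · rw [eJ, eH] at hc
          have ht2 : 0 < t^2 := by positivity
          nlinarith [hc, ht2]
        · rw [ebH, eH, htdef]
          field_simp
          ring
      -- general case via perturbation
      intro w
      by_cases hb : (H.mulVec v) ⬝ᵥ w = 0
      · have qvnn : 0 ≤ (J.mulVec v) ⬝ᵥ v + (L/2*r) * ((H.mulVec v) ⬝ᵥ v) := by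
          have hc := claim1 ((-2:ℝ) • v) ?_
          · have eJ : (J.mulVec ((-2:ℝ) • v)) ⬝ᵥ ((-2:ℝ) • v)
                = 4 * ((J.mulVec v) ⬝ᵥ v) := by
              simp only [Matrix.mulVec_smul, dotProduct_smul, smul_dotProduct, smul_eq_mul]
              ring
            have eH : (H.mulVec ((-2:ℝ) • v)) ⬝ᵥ ((-2:ℝ) • v)
                = 4 * ((H.mulVec v) ⬝ᵥ v) := by
              simp only [Matrix.mulVec_smul, dotProduct_smul, smul_dotProduct, smul_eq_mul]
              ring
            rw [eJ, eH] at hc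
            linarith [hc]
          · have e1 : (H.mulVec v) ⬝ᵥ ((-2:ℝ) • v) = -2 * ((H.mulVec v) ⬝ᵥ v) := by
              simp only [dotProduct_smul, smul_eq_mul]
            have e2 : (H.mulVec ((-2:ℝ) • v)) ⬝ᵥ ((-2:ℝ) • v)
                = 4 * ((H.mulVec v) ⬝ᵥ v) := by
              simp only [Matrix.mulVec_smul, dotProduct_smul, smul_dotProduct, smul_eq_mul]
              ring
            rw [e1, e2]; ring
        have hpert : ∀ ε : ℝ, ε ≠ 0 →
            0 ≤ ((J.mulVec w) ⬝ᵥ w + (L/2*r) * ((H.mulVec w) ⬝ᵥ w))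
              + 2*ε*((J.mulVec v) ⬝ᵥ w)
              + ε^2 * ((J.mulVec v) ⬝ᵥ v + (L/2*r) * ((H.mulVec v) ⬝ᵥ v)) := by
          intro ε hε
          have hb' : (H.mulVec v) ⬝ᵥ (w + ε • v) ≠ 0 := by
            rw [dotProduct_add, dotProduct_smul, smul_eq_mul, hb, zero_add]
            exact mul_ne_zero hε (ne_of_gt hqv)
          have hc := claim2 (w + ε • v) hb'
          rw [expJ ε w v, expH ε w v] at hc
          have hsw : (H.mulVec w) ⬝ᵥ v = 0 := by rw [hsH w v]; exact hb
          have hsw2 : (J.mulVec w) ⬝ᵥ v = (J.mulVec v) ⬝ᵥ w := hsJ w v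
          rw [hsw, hsw2] at hc
          nlinarith [hc]
        apply le_of_forall_pos_le_add
        intro δ hδ
        have hQv1 : (0:ℝ) < ((J.mulVec v) ⬝ᵥ v + (L/2*r) * ((H.mulVec v) ⬝ᵥ v)) + 1 := by
          linarith
        set ε := Real.sqrt (δ / (((J.mulVec v) ⬝ᵥ v + (L/2*r) * ((H.mulVec v) ⬝ᵥ v)) + 1))
          with hεdef
        have hε0 : 0 < ε := Real.sqrt_pos.mpr (by positivity)
        have hε2 : ε^2 = δ / (((J.mulVec v) ⬝ᵥ v + (L/2*r) * ((H.mulVec v) ⬝ᵥ v)) + 1) :=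
          Real.sq_sqrt (by positivity)
        have h1 := hpert ε hε0.ne'
        have h2 := hpert (-ε) (neg_ne_zero.mpr hε0.ne')
        have hε2Qv : ε^2 * ((J.mulVec v) ⬝ᵥ v + (L/2*r) * ((H.mulVec v) ⬝ᵥ v)) ≤ δ := by
          rw [hε2, div_mul_eq_mul_div, div_le_iff₀ hQv1]
          nlinarith
        nlinarith [h1, h2, hε2Qv]
      · exact claim2 w hb
  -- assemble PosSemidef
  rw [posSemidef_iff_dotProduct_mulVec]
  constructor
  · show (J + (L/2*r) • H)ᴴ = J + (L/2*r) • H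
    have hsymm : (J + (L/2*r) • H)ᵀ = J + (L/2*r) • H := by
      rw [transpose_add, transpose_smul, hJsymm.eq, hHsymm.eq]
    exact hsymm
  · intro x
    have hk := key x
    have e1 : star x = x := by simp
    rw [e1, Matrix.add_mulVec, Matrix.smul_mulVec, dotProduct_add, dotProduct_smul,
      smul_eq_mul]
    rw [dotProduct_comm x (J.mulVec x), dotProduct_comm x (H.mulVec x)]
    linarith
end

section
/- Let v ∈ ℝⁿ with Av = 0 be a global minimizer of Q(u) = ⟨g, u⟩ + (1/2)⟨J u, u⟩ + (L/6)‖u‖³_H over {u : Au = 0}, where H is symmetric positive definite, J symmetric. Then for all d with Ad = 0, ⟨(J + (L/2)‖v‖_H · H) d, d⟩ ≥ 0. -/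
open Matrix

private lemma symm_cross' {n : ℕ} (M : Matrix (Fin n) (Fin n) ℝ) (hM : M.IsSymm)
    (x y : Fin n → ℝ) : (M.mulVec x) ⬝ᵥ y = (M.mulVec y) ⬝ᵥ x := by
  rw [dotProduct_comm, Matrix.dotProduct_mulVec, ← Matrix.mulVec_transpose, hM]

private lemma cube_bound' (a b : ℝ) (ha : 0 ≤ a) (hab : a ≤ b) :
    b^3 - a^3 ≤ (3/2)*b*(b^2-a^2) := by
  nlinarith [sq_nonneg (b-a), sq_nonneg (b+a)]

set_option maxHeartbeats 1000000 in
/-- Purely scalar core of the argument. -/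
private lemma scalar_main (gv gd jvv jvd jdd hvv s p L : ℝ) (hL : 0 < L)
    (hp0 : 0 ≤ p)
    (hq : ∀ t : ℝ, 0 ≤ hvv + 2*t*s + t^2*p)
    (hmin : ∀ t : ℝ, gv + (1/2)*jvv + (L/6)*(Real.sqrt hvv)^3 ≤
      gv + t*gd + (1/2)*(jvv + 2*t*jvd + t^2*jdd)
        + (L/6)*(Real.sqrt (hvv + 2*t*s + t^2*p))^3) :
    0 ≤ jdd + (L/2*Real.sqrt hvv)*p := by
  have hvv0 : 0 ≤ hvv := by have := hq 0; nlinarith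
  have hc0 : 0 ≤ Real.sqrt hvv := Real.sqrt_nonneg _
  have hc_sq : (Real.sqrt hvv)^2 = hvv := Real.sq_sqrt hvv0
  -- Cauchy–Schwarz from nonnegativity of the quadratic
  have hCS : s^2 ≤ hvv * p := by
    rcases eq_or_lt_of_le hp0 with hp | hp
    · -- p = 0 : show s = 0
      by_contra h
      have hs : s ≠ 0 := by
        intro h0
        exact h (by rw [h0, ← hp]; norm_num)
      have := hq (-(hvv+1)/(2*s))
      rw [← hp] at this
      have h2 : hvv + 2*(-(hvv+1)/(2*s))*s + (-(hvv+1)/(2*s))^2*0 = -1 := by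
        field_simp
        ring
      rw [h2] at this
      linarith
    · have := hq (-s/p)
      have h2 : hvv + 2*(-s/p)*s + (-s/p)^2*p = hvv - s^2/p := by
        field_simp
        ring
      rw [h2] at this
      have h3 : s^2/p ≤ hvv := by linarith
      calc s^2 = (s^2/p)*p := by field_simp
        _ ≤ hvv * p := mul_le_mul_of_nonneg_right h3 hp.le
  by_cases hs0 : s = 0
  · -- symmetric case: compare t and -t, bound the cubes, take a limit t → 0⁺
    have key : ∀ t : ℝ, 0 < t → 0 ≤ jdd + (L/2)*p*Real.sqrt (hvv + t^2*p) := by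
      intro t ht
      have h1 := hmin t
      have h2 := hmin (-t)
      rw [hs0] at h1 h2
      have e1 : hvv + 2*t*0 + t^2*p = hvv + t^2*p := by ring
      have e2 : hvv + 2*(-t)*0 + (-t)^2*p = hvv + t^2*p := by ring
      rw [e1] at h1
      rw [e2] at h2
      have hadd := add_le_add h1 h2
      have hsum : 0 ≤ t^2*jdd + (L/3) * ((Real.sqrt (hvv + t^2*p))^3 - (Real.sqrt hvv)^3) := by
        nlinarith [hadd]
      have hle : hvv ≤ hvv + t^2*p := by nlinarith [sq_nonneg t]
      have hb : Real.sqrt hvv ≤ Real.sqrt (hvv + t^2*p) := Real.sqrt_le_sqrt hle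
      have hbsq : (Real.sqrt (hvv + t^2*p))^2 = hvv + t^2*p :=
        Real.sq_sqrt (le_trans hvv0 hle)
      have hcb := cube_bound' (Real.sqrt hvv) (Real.sqrt (hvv + t^2*p)) hc0 hb
      rw [hbsq, hc_sq] at hcb
      have ht2 : 0 < t^2 := by positivity
      have hL3 : (0:ℝ) < L/3 := by positivity
      nlinarith [hsum, hcb, mul_pos ht2 hL3]
    have hcont : Continuous (fun t : ℝ => jdd + (L/2)*p*Real.sqrt (hvv + t^2*p)) :=
      continuous_const.add (continuous_const.mul (Real.continuous_sqrt.comp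
        (continuous_const.add ((continuous_pow 2).mul continuous_const))))
    have hF : Filter.Tendsto (fun t : ℝ => jdd + (L/2)*p*Real.sqrt (hvv + t^2*p))
        (nhdsWithin 0 (Set.Ioi 0))
        (nhds (jdd + (L/2)*p*Real.sqrt (hvv + (0:ℝ)^2*p))) :=
      (hcont.tendsto 0).mono_left nhdsWithin_le_nhds
    have hge : 0 ≤ jdd + (L/2)*p*Real.sqrt (hvv + (0:ℝ)^2*p) :=
      ge_of_tendsto hF (Filter.eventually_of_mem self_mem_nhdsWithin (fun t ht => key t ht))
    have h0F : hvv + (0:ℝ)^2*p = hvv := by ring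
    rw [h0F] at hge
    nlinarith [hge]
  · -- s ≠ 0 : first-order condition + the special point t₀ = -2s/p
    have hp : 0 < p := by
      rcases eq_or_lt_of_le hp0 with hp | hp
      · exfalso
        apply hs0
        have : s^2 ≤ 0 := by rw [← hp] at hCS; nlinarith [hCS]
        nlinarith [sq_nonneg s, this]
      · exact hp
    have hvvpos : 0 < hvv := by
      rcases eq_or_lt_of_le hvv0 with h | h
      · exfalso
        apply hs0
        have : s^2 ≤ 0 := by rw [← h] at hCS; nlinarith [hCS]
        nlinarith [sq_nonneg s, this]
      · exact h
    have hcpos : 0 < Real.sqrt hvv := Real.sqrt_pos.mpr hvvpos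
    set c : ℝ := Real.sqrt hvv with hcdef
    -- the one-variable objective
    set f : ℝ → ℝ := fun t => gv + t*gd + (1/2)*(jvv + 2*t*jvd + t^2*jdd)
        + (L/6)*(Real.sqrt (hvv + 2*t*s + t^2*p))^3 with hf_def
    have hf : ∀ t : ℝ, f 0 ≤ f t := by
      intro t
      have h0 : f 0 = gv + (1/2)*jvv + (L/6)*c^3 := by
        simp only [hf_def]
        norm_num
        exact Or.inl rfl
      rw [h0]
      exact hmin t
    -- derivative of f at 0
    have hφ : HasDerivAt (fun t : ℝ => hvv + 2*t*s + t^2*p) (2*s) 0 := by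
      have h1 : HasDerivAt (fun t : ℝ => hvv + 2*t*s + t^2*p)
          ((0 + 2*1*s) + ((2:ℕ)*(0:ℝ)^(2-1))*p) 0 :=
        ((hasDerivAt_const 0 hvv).add (((hasDerivAt_id 0).const_mul 2).mul_const s)).add
          ((hasDerivAt_pow 2 0).mul_const p)
      convert h1 using 1
      norm_num
    have hφ0 : hvv + 2*(0:ℝ)*s + (0:ℝ)^2*p = hvv := by ring
    have hsq : HasDerivAt (fun t : ℝ => Real.sqrt (hvv + 2*t*s + t^2*p))
        ((2*s) / (2 * c)) 0 := by
      have h := hφ.sqrt (by rw [hφ0]; exact hvvpos.ne')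
      rw [hφ0] at h
      exact h
    have hcube : HasDerivAt (fun t : ℝ => (Real.sqrt (hvv + 2*t*s + t^2*p))^3)
        ((3:ℕ) * c^2 * ((2*s)/(2*c))) 0 := by
      have h := hsq.pow 3
      simp only [hφ0] at h
      convert h using 2
      all_goals rfl
    have hlin : HasDerivAt (fun t : ℝ => gv + t*gd + (1/2)*(jvv + 2*t*jvd + t^2*jdd))
        (gd + jvd) 0 := by
      have h1 : HasDerivAt (fun t : ℝ => gv + t*gd + (1/2)*(jvv + 2*t*jvd + t^2*jdd))
          ((0 + 1*gd) + (1/2) * ((0 + 2*1*jvd) + ((2:ℕ)*(0:ℝ)^(2-1))*jdd)) 0 :=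
        ((hasDerivAt_const 0 gv).add ((hasDerivAt_id 0).mul_const gd)).add
          ((((hasDerivAt_const 0 jvv).add (((hasDerivAt_id 0).const_mul 2).mul_const jvd)).add
            ((hasDerivAt_pow 2 0).mul_const jdd)).const_mul (1/2))
      convert h1 using 1
      push_cast
      ring
    have hfd : HasDerivAt f (gd + jvd + (L/2)*c*s) 0 := by
      have h := hlin.add (hcube.const_mul (L/6))
      have e : gd + jvd + (L/2)*c*s = (gd + jvd) + (L/6) * ((3:ℕ) * c^2 * ((2*s)/(2*c))) := by
        push_cast
        field_simp
        ring
      rw [e]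
      exact h
    have hmin0 : IsLocalMin f 0 := Filter.Eventually.of_forall hf
    have hFOC : gd + jvd + (L/2)*c*s = 0 := hmin0.hasDerivAt_eq_zero hfd
    -- evaluate at t₀ = -2s/p
    have hft := hf (-2*s/p)
    have hφt : hvv + 2*(-2*s/p)*s + (-2*s/p)^2*p = hvv := by
      field_simp
      ring
    simp only [hf_def, hφt, hφ0] at hft
    -- hft : gv + 0*gd + ... ≤ gv + t₀*gd + ...
    have hs2 : 0 < s^2 := by positivity
    have key : 0 ≤ (-2*s/p)*(gd + jvd) + (-2*s/p)^2/2 * jdd := by nlinarith [hft]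
    have hgj : gd + jvd = -((L/2)*c*s) := by linarith [hFOC]
    rw [hgj] at key
    have e : (-2*s/p)*(-((L/2)*c*s)) + (-2*s/p)^2/2 * jdd = L*c*s^2/p + 2*s^2/p^2*jdd := by
      field_simp
    rw [e] at key
    have h1 : 0 ≤ p^2/(2*s^2) * (L*c*s^2/p + 2*s^2/p^2 * jdd) :=
      mul_nonneg (by positivity) key
    have e2 : p^2/(2*s^2) * (L*c*s^2/p + 2*s^2/p^2 * jdd) = (L/2*c)*p + jdd := by
      field_simp
    rw [e2] at h1
    linarith

/-- If v ∈ ker(A) globally minimizes Q(u) = ⟨g,u⟩ + (1/2)⟨Ju,u⟩ + (L/6)‖u‖³_H over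
{u : Au = 0}, then ⟨(J + (L/2)‖v‖_H·H)d, d⟩ ≥ 0 for all d with Ad = 0. -/
theorem cubic_subproblem_psd_on_kernel {n m : ℕ}
    (A : Matrix (Fin m) (Fin n) ℝ)
    (H : Matrix (Fin n) (Fin n) ℝ) (hHsymm : H.IsSymm) (hHpd : H.PosDef)
    (J : Matrix (Fin n) (Fin n) ℝ) (hJsymm : J.IsSymm)
    (g v : Fin n → ℝ) (L : ℝ) (hL : 0 < L)
    (hv : A.mulVec v = 0)
    (hmin : ∀ u : Fin n → ℝ, A.mulVec u = 0 →
      g ⬝ᵥ v + (1 / 2) * ((J.mulVec v) ⬝ᵥ v) + (L / 6) * (Real.sqrt ((H.mulVec v) ⬝ᵥ v)) ^ 3 ≤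
      g ⬝ᵥ u + (1 / 2) * ((J.mulVec u) ⬝ᵥ u) + (L / 6) * (Real.sqrt ((H.mulVec u) ⬝ᵥ u)) ^ 3) :
    ∀ d : Fin n → ℝ, A.mulVec d = 0 →
      0 ≤ ((J + (L / 2 * Real.sqrt ((H.mulVec v) ⬝ᵥ v)) • H).mulVec d) ⬝ᵥ d := by
  intro d hd
  -- expansions
  have hA : ∀ t : ℝ, A.mulVec (v + t • d) = 0 := by
    intro t
    rw [Matrix.mulVec_add, Matrix.mulVec_smul, hv, hd]
    simp
  have hJexp : ∀ t : ℝ, (J.mulVec (v + t • d)) ⬝ᵥ (v + t • d)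
      = (J.mulVec v) ⬝ᵥ v + 2*t*((J.mulVec v) ⬝ᵥ d) + t^2*((J.mulVec d) ⬝ᵥ d) := by
    intro t
    have hcross : (J.mulVec d) ⬝ᵥ v = (J.mulVec v) ⬝ᵥ d := symm_cross' J hJsymm d v
    simp only [Matrix.mulVec_add, Matrix.mulVec_smul, add_dotProduct, smul_dotProduct,
      dotProduct_add, dotProduct_smul, smul_eq_mul]
    rw [hcross]
    ring
  have hHexp : ∀ t : ℝ, (H.mulVec (v + t • d)) ⬝ᵥ (v + t • d)
      = (H.mulVec v) ⬝ᵥ v + 2*t*((H.mulVec v) ⬝ᵥ d) + t^2*((H.mulVec d) ⬝ᵥ d) := by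
    intro t
    have hcross : (H.mulVec d) ⬝ᵥ v = (H.mulVec v) ⬝ᵥ d := symm_cross' H hHsymm d v
    simp only [Matrix.mulVec_add, Matrix.mulVec_smul, add_dotProduct, smul_dotProduct,
      dotProduct_add, dotProduct_smul, smul_eq_mul]
    rw [hcross]
    ring
  have hgexp : ∀ t : ℝ, g ⬝ᵥ (v + t • d) = g ⬝ᵥ v + t * (g ⬝ᵥ d) := by
    intro t
    simp [dotProduct_add, dotProduct_smul]
  have hp0 : 0 ≤ (H.mulVec d) ⬝ᵥ d := by
    have := hHpd.posSemidef.dotProduct_mulVec_nonneg d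
    simpa [dotProduct_comm] using this
  have hq : ∀ t : ℝ, 0 ≤ (H.mulVec v) ⬝ᵥ v + 2*t*((H.mulVec v) ⬝ᵥ d)
      + t^2*((H.mulVec d) ⬝ᵥ d) := by
    intro t
    rw [← hHexp t]
    have := hHpd.posSemidef.dotProduct_mulVec_nonneg (v + t • d)
    simpa [dotProduct_comm] using this
  have hmin' : ∀ t : ℝ, g ⬝ᵥ v + (1/2)*((J.mulVec v) ⬝ᵥ v)
      + (L/6)*(Real.sqrt ((H.mulVec v) ⬝ᵥ v))^3 ≤
      g ⬝ᵥ v + t*(g ⬝ᵥ d) + (1/2)*((J.mulVec v) ⬝ᵥ v + 2*t*((J.mulVec v) ⬝ᵥ d)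
        + t^2*((J.mulVec d) ⬝ᵥ d))
      + (L/6)*(Real.sqrt ((H.mulVec v) ⬝ᵥ v + 2*t*((H.mulVec v) ⬝ᵥ d)
        + t^2*((H.mulVec d) ⬝ᵥ d)))^3 := by
    intro t
    have ht := hmin (v + t • d) (hA t)
    rw [hJexp t, hHexp t, hgexp t] at ht
    exact ht
  have key := scalar_main (g ⬝ᵥ v) (g ⬝ᵥ d) ((J.mulVec v) ⬝ᵥ v) ((J.mulVec v) ⬝ᵥ d)
    ((J.mulVec d) ⬝ᵥ d) ((H.mulVec v) ⬝ᵥ v) ((H.mulVec v) ⬝ᵥ d) ((H.mulVec d) ⬝ᵥ d)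
    L hL hp0 hq hmin'
  have hgoal : ((J + (L / 2 * Real.sqrt ((H.mulVec v) ⬝ᵥ v)) • H).mulVec d) ⬝ᵥ d
      = (J.mulVec d) ⬝ᵥ d
        + (L/2*Real.sqrt ((H.mulVec v) ⬝ᵥ v))*((H.mulVec d) ⬝ᵥ d) := by
    rw [Matrix.add_mulVec, Matrix.smul_mulVec, add_dotProduct, smul_dotProduct,
      smul_eq_mul]
  rw [hgoal]
  exact key
end

section
/- Let (L_k)_{k≥0} be a positive sequence with L_{k+1} = 2^{i_k − 1} L_k where i_k ≥ 0 are integers, and suppose for every k, 2^{i_k} L_k ≤ 2·max{M, L_k} for some M > 0. Then L_k ≤ max{M, L_0} for all k, and the total count N(K) = Σ_{j=0}^{K}(i_j + 1) satisfies N(K) ≤ 2(K+1) + max{log₂(M/L_0), 0}. -/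
/-- Backtracking line-search bookkeeping: if L_{k+1} = 2^{i_k − 1} L_k with
2^{i_k} L_k ≤ 2·max{M, L_k} for all k, then L_k ≤ max{M, L_0} for all k, and
Σ_{j=0}^{K}(i_j + 1) ≤ 2(K+1) + max{log₂(M/L_0), 0}. -/
theorem backtracking_total_count (L : ℕ → ℝ) (i : ℕ → ℕ) (M : ℝ)
    (hM : 0 < M) (hL0 : 0 < L 0)
    (hrec : ∀ k, L (k + 1) = (2 : ℝ) ^ ((i k : ℤ) - 1) * L k)
    (hstop : ∀ k, (2 : ℝ) ^ (i k) * L k ≤ 2 * max M (L k)) :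
    (∀ k, L k ≤ max M (L 0)) ∧
    (∀ K : ℕ, (∑ j ∈ Finset.range (K + 1), ((i j : ℝ) + 1)) ≤
      2 * (K + 1) + max (Real.logb 2 (M / L 0)) 0) := by
  have hpos : ∀ k, 0 < L k := by
    intro k; induction k with
    | zero => exact hL0
    | succ n ih => rw [hrec n]; positivity
  have hstep : ∀ k, L (k + 1) ≤ max M (L k) := by
    intro k
    have h := hstop k
    have h2 : (2 : ℝ) ^ ((i k : ℤ) - 1) * L k = (2 : ℝ) ^ (i k) * L k / 2 := by
      rw [zpow_sub₀ (by norm_num : (2:ℝ) ≠ 0), zpow_natCast]; ring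
    rw [hrec k, h2]; linarith
  have hbound : ∀ k, L k ≤ max M (L 0) := by
    intro k; induction k with
    | zero => exact le_max_right _ _
    | succ n ih =>
      calc L (n + 1) ≤ max M (L n) := hstep n
        _ ≤ max M (max M (L 0)) := max_le_max le_rfl ih
        _ = max M (L 0) := by rw [← max_assoc, max_self]
  refine ⟨hbound, ?_⟩
  have hlog : ∀ k, Real.logb 2 (L (k + 1)) = ((i k : ℝ) - 1) + Real.logb 2 (L k) := by
    intro k
    rw [hrec k, Real.logb_mul (by positivity) (hpos k).ne']
    congr 1
    have hlog2 : Real.log 2 ≠ 0 := (Real.log_pos (by norm_num)).ne'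
    rw [Real.logb, Real.log_zpow]
    field_simp
    push_cast; rfl
  have htel : ∀ n : ℕ, ∑ j ∈ Finset.range n, ((i j : ℝ) - 1) =
      Real.logb 2 (L n) - Real.logb 2 (L 0) := by
    intro n; induction n with
    | zero => simp
    | succ m ih =>
      rw [Finset.sum_range_succ, ih, hlog m]; ring
  intro K
  have hmono : Real.logb 2 (L (K + 1)) ≤ Real.logb 2 (max M (L 0)) :=
    Real.logb_le_logb_of_le (by norm_num) (hpos (K + 1)) (hbound (K + 1))
  have hmax : Real.logb 2 (max M (L 0)) - Real.logb 2 (L 0) =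
      max (Real.logb 2 (M / L 0)) 0 := by
    rcases le_total M (L 0) with h | h
    · rw [max_eq_right h, max_eq_right, sub_self]
      exact Real.logb_nonpos (by norm_num) (by positivity)
        (by rw [div_le_one hL0]; exact h)
    · rw [max_eq_left h, ← Real.logb_div hM.ne' hL0.ne', max_eq_left]
      exact Real.logb_nonneg (by norm_num) (by rw [le_div_iff₀ hL0]; linarith)
  have hsum : ∑ j ∈ Finset.range (K + 1), ((i j : ℝ) + 1) =
      (∑ j ∈ Finset.range (K + 1), ((i j : ℝ) - 1)) + 2 * (K + 1) := by
    simp only [show ∀ j : ℕ, ((i j : ℝ) + 1) = ((i j : ℝ) - 1) + 2 from fun j => by ring,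
      Finset.sum_add_distrib, Finset.sum_const, Finset.card_range, nsmul_eq_mul]
    push_cast; ring
  rw [hsum, htel (K + 1)]
  linarith
end
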